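/- arXiv:2107.03310 — 3 statements merged into one kernel-verified Lean document; each statement's English description precedes it below -/
import Mathlib

section
/- Let W_aff = ZΦ ⋊ W_fin be the affine Weyl group of an irreducible root system Φ with Weyl group W_fin, and let x, y ∈ W_aff be of minimal length in their cosets W_fin x and W_fin y respectively. Then there exists at most one reflection t ∈ W_aff with ty < y (Bruhat order) and ty ∈ W_fin x. -/
open scoped RealInnerProductSpace Pointwise Classical

/-- The Bruhat order on a Coxeter group: `u < w` iff there is a chain
`u = u₀, u₁, …, u_k = w` (`k ≥ 1`) where each `u_{j+1} = t_j * u_j` for a reflection `t_j`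
and the lengths strictly increase along the chain. -/
def CoxeterSystem.bruhatLT {B W : Type*} [Group W] {M : CoxeterMatrix B}
    (cs : CoxeterSystem M W) (u w : W) : Prop :=
  Relation.TransGen
    (fun a b : W => (∃ t : W, cs.IsReflection t ∧ b = t * a) ∧ cs.length a < cs.length b) u w

noncomputable section AffineWeyl

variable {V : Type*} [NormedAddCommGroup V] [InnerProductSpace ℝ V] [FiniteDimensional ℝ V]

/-- A (reduced, crystallographic, irreducible) root system in a finite-dimensional real
inner product space `V`. -/
structure RootSystemIn (V : Type*) [NormedAddCommGroup V] [InnerProductSpace ℝ V] : Type _ where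
  /-- the set of roots -/
  roots : Set V
  finite : roots.Finite
  nonempty : roots.Nonempty
  ne_zero : ∀ α ∈ roots, α ≠ 0
  span_top : Submodule.span ℝ roots = ⊤
  /-- the root system is reduced -/
  reduced : ∀ α ∈ roots, ∀ t : ℝ, t • α ∈ roots → t = 1 ∨ t = -1
  /-- roots are permuted by the reflection in (the hyperplane orthogonal to) each root -/
  reflect_mem : ∀ α ∈ roots, ∀ β ∈ roots, β - (2 * ⟪β, α⟫ / ⟪α, α⟫) • α ∈ roots
  /-- the root system is crystallographic: `⟨β, α^∨⟩ ∈ ℤ` -/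
  crystal : ∀ α ∈ roots, ∀ β ∈ roots, ∃ k : ℤ, 2 * ⟪β, α⟫ / ⟪α, α⟫ = (k : ℝ)
  /-- the root system is irreducible -/
  irred : ∀ A B : Set V, A ∪ B = roots → Disjoint A B →
    (∀ a ∈ A, ∀ b ∈ B, ⟪a, b⟫ = 0) → A = ∅ ∨ B = ∅

/-- `Pos` is a positive system for the root system `R`: the roots on which some linear
functional (nonvanishing on all roots) is positive. -/
def IsPositiveSystem (R : RootSystemIn V) (Pos : Set V) : Prop :=
  ∃ f : V →ₗ[ℝ] ℝ, (∀ α ∈ R.roots, f α ≠ 0) ∧ Pos = {α | α ∈ R.roots ∧ 0 < f α}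

/-- The (finite) reflection `s_α`, as an affine transformation of `V`. -/
def sfin (α : V) : V ≃ᵃ[ℝ] V :=
  ((Submodule.reflection (ℝ ∙ α)ᗮ).toLinearEquiv).toAffineEquiv

/-- The affine reflection `s_{α,m} = t_{mα} ∘ s_α`. -/
def saff (α : V) (m : ℤ) : V ≃ᵃ[ℝ] V :=
  AffineEquiv.constVAdd ℝ V ((m : ℝ) • α) * sfin α

/-- The finite Weyl group `W_fin`, generated by the reflections `s_α`, `α ∈ Φ`. -/
def Wfin (R : RootSystemIn V) : Subgroup (V ≃ᵃ[ℝ] V) :=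
  Subgroup.closure {g | ∃ α ∈ R.roots, g = sfin α}

/-- The affine Weyl group `W_aff = ℤΦ ⋊ W_fin`, generated by the reflections `s_α` and the
translations by elements of the root lattice `ℤΦ`. -/
def Waff (R : RootSystemIn V) : Subgroup (V ≃ᵃ[ℝ] V) :=
  Subgroup.closure ({g | ∃ α ∈ R.roots, g = sfin α} ∪
    {g | ∃ γ ∈ AddSubgroup.closure R.roots, g = AffineEquiv.constVAdd ℝ V γ})

/-- The base (set of simple roots) of a positive system: the indecomposable positive roots. -/
def baseOf (Pos : Set V) : Set V :=
  {α | α ∈ Pos ∧ ¬∃ β ∈ Pos, ∃ γ ∈ Pos, α = β + γ}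

/-- `αh` is the highest short root: it is a positive root of minimal length, and it dominates
every other root of the same length. -/
def IsHighestShortRoot (R : RootSystemIn V) (Pos : Set V) (αh : V) : Prop :=
  αh ∈ Pos ∧ (∀ β ∈ R.roots, ⟪αh, αh⟫ ≤ ⟪β, β⟫) ∧
    ∀ β ∈ Pos, ⟪β, β⟫ = ⟪αh, αh⟫ → αh - β ∈ AddSubmonoid.closure (baseOf Pos)

/-- The Coxeter system `cs` on `W_aff` is the standard one: its simple reflections are the
`s_α`, `α ∈ Δ`, together with `s_{αh,1}`; its reflections are the `s_{α,m}`, `α ∈ Φ⁺`, `m ∈ ℤ`. -/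
def IsAffineCoxeterStructure (R : RootSystemIn V) {B : Type*} {M : CoxeterMatrix B}
    (cs : CoxeterSystem M (Waff R)) (Pos : Set V) (αh : V) : Prop :=
  ({g : ↥(Waff R) | ∃ i, g = cs.simple i} =
      {g : ↥(Waff R) | ∃ α ∈ baseOf Pos, (g : V ≃ᵃ[ℝ] V) = sfin α} ∪
        {g : ↥(Waff R) | (g : V ≃ᵃ[ℝ] V) = saff αh 1}) ∧
    ∀ t : ↥(Waff R), cs.IsReflection t ↔ ∃ α ∈ Pos, ∃ m : ℤ, (t : V ≃ᵃ[ℝ] V) = saff α m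

/-- The set `W_aff⁺` of elements of minimal length in their coset `W_fin x`. -/
def WaffPlus (R : RootSystemIn V) {B : Type*} {M : CoxeterMatrix B}
    (cs : CoxeterSystem M (Waff R)) : Set ↥(Waff R) :=
  {x | ∀ w : ↥(Waff R), (w : V ≃ᵃ[ℝ] V) ∈ Wfin R → cs.length x ≤ cs.length (w * x)}

/-- Half sum of positive roots. -/
def rhoOf (Pos : Set V) : V := (2⁻¹ : ℝ) • ∑ᶠ α ∈ Pos, α

/-- The `p`-dilated dot action of an affine transformation `g = t_γ w` on `V`:
`g · x = w(x+ρ) + pγ - ρ`. -/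
def dotAct (p : ℕ) (ρ : V) (g : V ≃ᵃ[ℝ] V) (x : V) : V :=
  (p : ℝ) • g ((p : ℝ)⁻¹ • (x + ρ)) - ρ

/-- The fundamental alcove `C_fund = { x : 0 < ⟨x+ρ, α^∨⟩ < p for all α ∈ Φ⁺ }`. -/
def Cfund (p : ℕ) (Pos : Set V) (ρ : V) : Set V :=
  {v | ∀ α ∈ Pos, 0 < 2 * ⟪v + ρ, α⟫ / ⟪α, α⟫ ∧ 2 * ⟪v + ρ, α⟫ / ⟪α, α⟫ < p}

/-- `H` separates `A` and `B`: they lie in different connected components of `Hᶜ`. -/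
def Separates (H A B : Set V) : Prop :=
  A ⊆ Hᶜ ∧ B ⊆ Hᶜ ∧ ∀ a ∈ A, ∀ b ∈ B,
    connectedComponentIn Hᶜ a ≠ connectedComponentIn Hᶜ b

/-- The sign `det(w) = ±1` of an affine transformation (the sign of the determinant of its
linear part), as an integer. -/
def sgnW (g : V ≃ᵃ[ℝ] V) : ℤ :=
  if LinearMap.det (g.linear : V →ₗ[ℝ] V) < 0 then -1 else 1

/-- For a reflection `t = s_{α,m}` with `α ∈ Φ⁺`, `mval t = m`. -/
def mval (Pos : Set V) (t : V ≃ᵃ[ℝ] V) : ℤ :=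
  if h : ∃ am : V × ℤ, am.1 ∈ Pos ∧ t = saff am.1 am.2 then h.choose.2 else 0

/-- Defining relations of the anti-spherical module `sign ⊗_{ℤ[W_fin]} ℤ[W_aff]`. -/
def relSet (R : RootSystemIn V) : Set (↥(Waff R) →₀ ℤ) :=
  {f | ∃ w x : ↥(Waff R), (w : V ≃ᵃ[ℝ] V) ∈ Wfin R ∧
    f = Finsupp.single (w * x) 1 - sgnW (w : V ≃ᵃ[ℝ] V) • Finsupp.single x 1}

/-- The anti-spherical module `M_asph = sign ⊗_{ℤ[W_fin]} ℤ[W_aff]`, presented as the quotient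
of the free `ℤ`-module on `W_aff` by the relations `(w x) - det(w)·x` for `w ∈ W_fin`. -/
abbrev Masph (R : RootSystemIn V) :=
  (↥(Waff R) →₀ ℤ) ⧸ Submodule.span ℤ (relSet R)

/-- The standard element `N_x ∈ M_asph`. -/
def NN (R : RootSystemIn V) (x : ↥(Waff R)) : Masph R :=
  Submodule.Quotient.mk (Finsupp.single x 1)

/-- Right multiplication by `y ∈ W_aff` on the anti-spherical module: `N_x · y = N_{xy}`. -/
def rmul (R : RootSystemIn V) (y : ↥(Waff R)) : Masph R →ₗ[ℤ] Masph R :=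
  Submodule.mapQ _ _ (Finsupp.lmapDomain ℤ ℤ (fun x => x * y))
    (by
      rw [Submodule.span_le]
      rintro f ⟨w, x, hw, rfl⟩
      simp only [SetLike.mem_coe, Submodule.mem_comap, map_sub, map_zsmul,
        Finsupp.lmapDomain_apply, Finsupp.mapDomain_single]
      exact Submodule.subset_span ⟨w, x * y, hw, by rw [mul_assoc]⟩)

/-- The Jantzen sum formula element
`JSF_x = Σ_{t ∈ R_L(x)} ν_p(m(t)·p) · N_{tx} ∈ M_asph`. -/
def JSF (R : RootSystemIn V) (Pos : Set V) (p : ℕ) {B : Type*} {M : CoxeterMatrix B}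
    (cs : CoxeterSystem M (Waff R)) (x : ↥(Waff R)) : Masph R :=
  ∑ᶠ t ∈ {t : ↥(Waff R) | cs.IsReflection t ∧ cs.bruhatLT (t * x) x},
    (padicValInt p (mval Pos (t : V ≃ᵃ[ℝ] V) * p) : ℤ) • NN R (t * x)

section AuxLemmas

lemma CoxeterSystem.bruhatLT_length_lt {B W : Type*} [Group W] {M : CoxeterMatrix B}
    (cs : CoxeterSystem M W) {u w : W} (h : cs.bruhatLT u w) :
    cs.length u < cs.length w := by
  induction h with
  | single h => exact h.2
  | tail _ h ih => exact ih.trans h.2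

lemma sfin_apply (α v : V) : sfin α v = v - (2 * ⟪v, α⟫ / ⟪α, α⟫) • α := by
  have h := Submodule.starProjection_add_starProjection_orthogonal (K := ℝ ∙ α) v
  have hproj : ((ℝ ∙ α).starProjection v : V) = (⟪α, v⟫ / (‖α‖ ^ 2 : ℝ)) • α := by
    simpa using Submodule.starProjection_singleton ℝ v
  have h2 : ((ℝ ∙ α)ᗮ.starProjection v : V) = v - (⟪α, v⟫ / (‖α‖ ^ 2 : ℝ)) • α := by
    rw [← hproj]; exact eq_sub_of_add_eq' h
  show (Submodule.reflection (ℝ ∙ α)ᗮ) v = _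
  rw [Submodule.reflection_apply, h2, real_inner_self_eq_norm_sq, real_inner_comm v α]
  match_scalars <;> ring

lemma saff_apply (α : V) (m : ℤ) (v : V) : saff α m v = (m : ℝ) • α + sfin α v := rfl

lemma sfin_zero (α : V) : sfin α 0 = 0 := by simp [sfin_apply]

lemma sfin_smul (α : V) (c : ℝ) (v : V) : sfin α (c • v) = c • sfin α v := by
  show (Submodule.reflection (ℝ ∙ α)ᗮ) (c • v) = c • (Submodule.reflection (ℝ ∙ α)ᗮ) v
  exact map_smul _ c v

lemma saff_zero_eq (α : V) : saff α 0 = sfin α := by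
  show AffineEquiv.constVAdd ℝ V (((0:ℤ) : ℝ) • α) * sfin α = sfin α
  norm_num
  rfl

lemma Wfin_fixes_zero (R : RootSystemIn V) {g : V ≃ᵃ[ℝ] V} (hg : g ∈ Wfin R) :
    g 0 = 0 := by
  induction hg using Subgroup.closure_induction with
  | mem g hg => obtain ⟨α, -, rfl⟩ := hg; exact sfin_zero α
  | one => rfl
  | mul g h _ _ ihg ihh =>
      show g (h 0) = 0
      rw [ihh, ihg]
  | inv g _ ihg =>
      calc g⁻¹ 0 = g⁻¹ (g 0) := by rw [ihg]
        _ = (g⁻¹ * g) 0 := rfl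
        _ = (1 : V ≃ᵃ[ℝ] V) 0 := by rw [inv_mul_cancel]
        _ = 0 := rfl

end AuxLemmas

end AffineWeyl

/-- For `x, y ∈ W_aff⁺` (minimal length in their cosets `W_fin x`, `W_fin y`), there is at most
one reflection `t` of `W_aff` with `t y < y` in the Bruhat order and `t y ∈ W_fin x`. -/
theorem atMostOne_reflection_coset
    {V : Type*} [NormedAddCommGroup V] [InnerProductSpace ℝ V] [FiniteDimensional ℝ V]
    (R : RootSystemIn V) (Pos : Set V) (hPos : IsPositiveSystem R Pos)
    (αh : V) (hαh : IsHighestShortRoot R Pos αh)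
    {B : Type*} {M : CoxeterMatrix B} (cs : CoxeterSystem M (Waff R))
    (hcs : IsAffineCoxeterStructure R cs Pos αh)
    (x y : ↥(Waff R)) (hx : x ∈ WaffPlus R cs) (hy : y ∈ WaffPlus R cs)
    (t t' : ↥(Waff R))
    (ht : cs.IsReflection t ∧ cs.bruhatLT (t * y) y ∧
      ∃ w : ↥(Waff R), (w : V ≃ᵃ[ℝ] V) ∈ Wfin R ∧ t * y = w * x)
    (ht' : cs.IsReflection t' ∧ cs.bruhatLT (t' * y) y ∧
      ∃ w : ↥(Waff R), (w : V ≃ᵃ[ℝ] V) ∈ Wfin R ∧ t' * y = w * x) :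
    t = t' := by
  classical
  obtain ⟨f, hf, hPosEq⟩ := hPos
  obtain ⟨htrefl, htlt, w, hw, hwx⟩ := ht
  obtain ⟨ht'refl, ht'lt, w', hw', hw'x⟩ := ht'
  obtain ⟨α, hαPos, m, htc⟩ := (hcs.2 t).mp htrefl
  obtain ⟨α', hα'Pos, m', ht'c⟩ := (hcs.2 t').mp ht'refl
  have hαroots : α ∈ R.roots := by rw [hPosEq] at hαPos; exact hαPos.1
  have hα'roots : α' ∈ R.roots := by rw [hPosEq] at hα'Pos; exact hα'Pos.1
  have hfα : 0 < f α := by rw [hPosEq] at hαPos; exact hαPos.2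
  have hfα' : 0 < f α' := by rw [hPosEq] at hα'Pos; exact hα'Pos.2
  have hαne : α ≠ 0 := R.ne_zero α hαroots
  have hα'ne : α' ≠ 0 := R.ne_zero α' hα'roots
  -- m ≠ 0 and m' ≠ 0, else t (resp. t') ∈ W_fin contradicts minimality of y
  have hmne : ∀ (u : ↥(Waff R)) (β : V), β ∈ R.roots → (u : V ≃ᵃ[ℝ] V) = saff β 0 →
      cs.bruhatLT (u * y) y → False := by
    intro u β hβ huc hult
    have humem : (u : V ≃ᵃ[ℝ] V) ∈ Wfin R := by
      rw [huc, saff_zero_eq]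
      exact Subgroup.subset_closure ⟨β, hβ, rfl⟩
    exact absurd (hy u humem) (not_le.mpr (cs.bruhatLT_length_lt hult))
  -- the product t' * t lies in W_fin
  have httinv : t⁻¹ = t := htrefl.inv
  have key : t' * t = w' * w⁻¹ := by
    calc t' * t = t' * t⁻¹ := by rw [httinv]
      _ = (t' * y) * (t * y)⁻¹ := by group
      _ = (w' * x) * (w * x)⁻¹ := by rw [hwx, hw'x]
      _ = w' * w⁻¹ := by group
  have hmem : ((t' * t : ↥(Waff R)) : V ≃ᵃ[ℝ] V) ∈ Wfin R := by
    rw [key]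
    push_cast
    exact mul_mem hw' (inv_mem hw)
  have h0 : ((t' * t : ↥(Waff R)) : V ≃ᵃ[ℝ] V) 0 = 0 := Wfin_fixes_zero R hmem
  have hcoe : ((t' * t : ↥(Waff R)) : V ≃ᵃ[ℝ] V) = saff α' m' * saff α m := by
    have : ((t' * t : ↥(Waff R)) : V ≃ᵃ[ℝ] V) = (t' : V ≃ᵃ[ℝ] V) * (t : V ≃ᵃ[ℝ] V) := rfl
    rw [this, htc, ht'c]
  rw [hcoe] at h0
  have h0' : (m' : ℝ) • α' + (m : ℝ) • (α - (2 * ⟪α, α'⟫ / ⟪α', α'⟫) • α') = 0 := by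
    have h00 : (saff α' m' * saff α m) 0 = saff α' m' (saff α m 0) := rfl
    rw [h00, show saff α m 0 = (m : ℝ) • α from by rw [saff_apply, sfin_zero, add_zero],
      saff_apply, sfin_smul, sfin_apply] at h0
    exact h0
  set c : ℝ := 2 * ⟪α, α'⟫ / ⟪α', α'⟫ with hc
  have hm : m ≠ 0 := by
    rintro rfl
    exact hmne t α hαroots htc htlt
  have hm' : m' ≠ 0 := by
    rintro rfl
    exact hmne t' α' hα'roots ht'c ht'lt
  -- from the equation, α is proportional to α'
  have hprop : α = (((m : ℝ) * c - m') / m) • α' := by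
    have hmR : (m : ℝ) ≠ 0 := Int.cast_ne_zero.mpr hm
    have h1 : (m : ℝ) • α = ((m : ℝ) * c - m') • α' := by
      have h := h0'
      rw [smul_sub, smul_smul] at h
      have h2 := eq_neg_of_add_eq_zero_right h
      rw [sub_eq_iff_eq_add] at h2
      rw [h2, sub_smul]
      abel
    calc α = (m : ℝ)⁻¹ • ((m : ℝ) • α) := by rw [inv_smul_smul₀ hmR]
    _ = (((m : ℝ) * c - m') / m) • α' := by
        rw [h1, smul_smul, div_eq_mul_inv, mul_comm]
  -- by reducedness and positivity, α = α'
  have hratio := R.reduced α' hα'roots (((m : ℝ) * c - m') / m) (by rw [← hprop]; exact hαroots)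
  have hαα' : α = α' := by
    rcases hratio with h1 | h1
    · rw [h1, one_smul] at hprop; exact hprop
    · exfalso
      rw [h1, neg_one_smul] at hprop
      have : f α = -f α' := by rw [hprop, map_neg]
      linarith
  -- conclude m = m', hence t = t'
  subst hαα'
  have hcval : c = 2 := by
    rw [hc, mul_div_assoc, div_self (inner_self_ne_zero.mpr hαne), mul_one]
  have hmm' : ((m' : ℝ) - m) • α = 0 := by
    rw [hcval] at h0'
    calc ((m' : ℝ) - m) • α = (m' : ℝ) • α + (m : ℝ) • (α - (2 : ℝ) • α) := by
          match_scalars <;> ring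
      _ = 0 := h0'
  have hmeq : (m : ℤ) = m' := by
    rcases smul_eq_zero.mp hmm' with h | h
    · have : (m' : ℝ) = (m : ℝ) := by linarith [sub_eq_zero.mp h]
      exact_mod_cast this.symm
    · exact absurd h hαne
  apply Subtype.ext
  rw [htc, ht'c, hmeq]
end

section
/- Let W_aff be the affine Weyl group of an irreducible root system acting on X_R by the p-dilated dot action (p ≥ h). For x ∈ W_aff and w ∈ W_fin, the set of reflections t ∈ R_L(wx) with t ∉ W_fin equals w (R_L(x) \ R(W_fin)) w⁻¹, where R_L(y) is the set of reflections t with ty < y and R(W_fin) is the set of reflections lying in W_fin. -/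
open scoped RealInnerProductSpace Pointwise Classical

open scoped Classical

namespace CoxAux

open CoxeterSystem

private lemma if_neg_pull (c : Prop) [Decidable c] (x : ℤˣ) :
    (if c then -x else x) = (if c then (-1 : ℤˣ) else 1) * x := by
  split_ifs <;> simp

section abstractPair

variable {G : Type*} [Group G] (a b : G) (ha : a * a = 1) (hb : b * b = 1)
  (η ζ : Equiv.Perm (G × ℤˣ))
  (hη : ∀ p : G × ℤˣ, η p = (a * p.1 * a, if p.1 = a then -p.2 else p.2))
  (hζ : ∀ p : G × ℤˣ, ζ p = (b * p.1 * b, if p.1 = b then -p.2 else p.2))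

include ha hb hη hζ in
private lemma pair_pow (k : ℕ) (p : G × ℤˣ) :
    ((η * ζ) ^ k) p = ((a * b) ^ k * p.1 * ((a * b) ^ k)⁻¹,
      (∏ l ∈ Finset.range (2 * k),
        (if p.1 = b * (a * b) ^ l then (-1 : ℤˣ) else 1)) * p.2) := by
  have cana : ∀ x : G, a * (a * x) = x := by
    intro x; rw [← mul_assoc, ha, one_mul]
  have canb : ∀ x : G, b * (b * x) = x := by
    intro x; rw [← mul_assoc, hb, one_mul]
  have hbinv : b⁻¹ = b := by
    rw [← mul_one b⁻¹, ← hb, ← mul_assoc, inv_mul_cancel, one_mul]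
  have hainv : a⁻¹ = a := by
    rw [← mul_one a⁻¹, ← ha, ← mul_assoc, inv_mul_cancel, one_mul]
  set c : G := a * b with hc
  have hcinv : c⁻¹ = b * a := by rw [hc, mul_inv_rev, hainv, hbinv]
  induction k generalizing p with
  | zero => simp
  | succ k ih =>
    rw [pow_succ, Equiv.Perm.mul_apply]
    have hcond1 : (b * p.1 * b = a) ↔ (p.1 = b * c ^ 1) := by
      rw [pow_one, hc]
      constructor
      · intro h
        have := congrArg (fun z => b * (z * b)) h
        rw [mul_assoc] at this
        rw [← this]
        simp [mul_assoc, canb, hb]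
      · intro h
        rw [h]
        simp [mul_assoc, canb, cana, hb, ha]
    have hcond0 : (p.1 = b) ↔ (p.1 = b * c ^ 0) := by rw [pow_zero, mul_one]
    have hstep : (η * ζ) p =
        (c * p.1 * c⁻¹,
          ((if p.1 = b * c ^ 1 then (-1 : ℤˣ) else 1) *
            ((if p.1 = b * c ^ 0 then (-1 : ℤˣ) else 1) * p.2))) := by
      rw [Equiv.Perm.mul_apply, hζ, hη]
      dsimp only
      rw [Prod.mk.injEq]
      constructor
      · rw [hcinv, hc]
        simp [mul_assoc]
      · rw [if_neg_pull _ p.2, if_neg_pull, if_neg_pull]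
        simp only [hcond1, ← hcond0]
        simp [mul_assoc, mul_comm, mul_left_comm]
    rw [hstep, ih]
    dsimp only
    rw [Prod.mk.injEq]
    constructor
    · rw [pow_succ]; group
    · have hcond : ∀ l : ℕ, (c * p.1 * c⁻¹ = b * c ^ l) ↔ (p.1 = b * c ^ (2 + l)) := by
        intro l
        have key : c⁻¹ * (b * c ^ l) * c = b * c ^ (2 + l) := by
          have h1 : c⁻¹ * b = b * c := by rw [hcinv, hc, mul_assoc]
          calc c⁻¹ * (b * c ^ l) * c = (c⁻¹ * b) * (c ^ l * c) := by group
          _ = b * (c * (c ^ l * c)) := by rw [h1]; group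
          _ = b * c ^ (2 + l) := by
              rw [← pow_succ, ← pow_succ', show l + 1 + 1 = 2 + l by omega]
        constructor
        · intro h
          rw [← key, ← h]; group
        · intro h
          rw [← key] at h
          rw [h]; group
      have hre : (2 : ℕ) * (k + 1) = 2 + 2 * k := by ring
      rw [hre, Finset.prod_range_add]
      rw [Finset.prod_range_succ, Finset.prod_range_one]
      have : ∀ l ∈ Finset.range (2 * k),
          (if c * p.1 * c⁻¹ = b * c ^ l then (-1 : ℤˣ) else 1) =
          (if p.1 = b * c ^ (2 + l) then (-1 : ℤˣ) else 1) := by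
        intro l _
        simp only [hcond l]
      rw [Finset.prod_congr rfl this]
      have hac : ∀ x y z w : ℤˣ, x * (z * (y * w)) = y * z * x * w := by
        intros x y z w
        simp [mul_assoc, mul_comm, mul_left_comm]
      exact hac _ _ _ _

end abstractPair

section mainCox

variable {B W : Type*} [Group W] {M : CoxeterMatrix B} (cs : CoxeterSystem M W)

local prefix:100 "ss" => cs.simple
local prefix:100 "ℓ" => cs.length

private noncomputable def eta (i : B) : Equiv.Perm (W × ℤˣ) :=
  Function.Involutive.toPerm
    (fun p => (ss i * p.1 * ss i, if p.1 = ss i then -p.2 else p.2))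
    (by
      intro p
      dsimp only
      rw [Prod.mk.injEq]
      have h1 : ss i * (ss i * p.1 * ss i) * ss i = p.1 := by
        simp [mul_assoc, cs.simple_mul_simple_cancel_left, cs.simple_mul_simple_self]
      have h2 : (ss i * p.1 * ss i = ss i) ↔ p.1 = ss i := by
        constructor
        · intro h
          have := congrArg (fun z => ss i * z * ss i) h
          simpa [mul_assoc, cs.simple_mul_simple_cancel_left,
            cs.simple_mul_simple_self] using this
        · intro h
          rw [h]
          simp [mul_assoc, cs.simple_mul_simple_self]
      by_cases hc : p.1 = ss i
      · simp [hc, h2, h1, cs.simple_mul_simple_self, mul_assoc]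
      · simp [hc, h2, h1])

private lemma eta_def (i : B) (p : W × ℤˣ) :
    eta cs i p = (ss i * p.1 * ss i, if p.1 = ss i then -p.2 else p.2) := rfl

private lemma eta_liftable : M.IsLiftable (fun i => eta cs i) := by
  intro i j
  apply Equiv.ext
  intro p
  rw [show ((fun i => eta cs i) i * (fun i => eta cs i) j) = eta cs i * eta cs j from rfl]
  rw [pair_pow (ss i) (ss j) (cs.simple_mul_simple_self i) (cs.simple_mul_simple_self j)
    (eta cs i) (eta cs j) (eta_def cs i) (eta_def cs j) (M i j) p]
  rw [cs.simple_mul_simple_pow]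
  have hprod : (∏ l ∈ Finset.range (2 * M i j),
      (if p.1 = ss j * (ss i * ss j) ^ l then (-1 : ℤˣ) else 1)) = 1 := by
    rw [two_mul, Finset.prod_range_add]
    have : ∀ l ∈ Finset.range (M i j),
        (if p.1 = ss j * (ss i * ss j) ^ (M i j + l) then (-1 : ℤˣ) else 1) =
        (if p.1 = ss j * (ss i * ss j) ^ l then (-1 : ℤˣ) else 1) := by
      intro l _
      rw [pow_add, cs.simple_mul_simple_pow, one_mul]
    rw [Finset.prod_congr rfl this]
    exact Int.units_mul_self _
  rw [hprod, one_mul]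
  simp

private noncomputable def theta : W →* Equiv.Perm (W × ℤˣ) :=
  cs.lift ⟨fun i => eta cs i, eta_liftable cs⟩

private lemma theta_simple (i : B) : theta cs (ss i) = eta cs i :=
  cs.lift_apply_simple (eta_liftable cs) i

private lemma theta_apply : ∀ (w t : W) (ε : ℤˣ),
    theta cs w (t, ε) = (w * t * w⁻¹, ε * ((theta cs w) (t, 1)).2) := by
  intro w
  induction w using cs.simple_induction with
  | simple i =>
    intro t ε
    rw [theta_simple, eta_def, eta_def]
    dsimp only
    rw [cs.inv_simple]
    by_cases hc : t = ss i <;> simp [hc]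
  | one =>
    intro t ε
    simp
  | mul u v hu hv =>
    intro t ε
    rw [map_mul, Equiv.Perm.mul_apply, Equiv.Perm.mul_apply, hv t ε, hv t 1]
    dsimp only
    rw [one_mul, hu (v * t * v⁻¹) (ε * ((theta cs v) (t, 1)).2),
      hu (v * t * v⁻¹) (((theta cs v) (t, 1)).2)]
    dsimp only
    rw [Prod.mk.injEq]
    constructor
    · group
    · rw [mul_assoc]

private noncomputable def nsgn (w t : W) : ℤˣ := ((theta cs w⁻¹) (t, 1)).2

private lemma nsgn_simple (i : B) (t : W) :
    nsgn cs (ss i) t = if t = ss i then -1 else 1 := by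
  unfold nsgn
  rw [cs.inv_simple, theta_simple, eta_def]

private lemma nsgn_one (t : W) : nsgn cs 1 t = 1 := by
  unfold nsgn
  rw [inv_one, map_one]
  rfl

private lemma nsgn_mul (u v t : W) :
    nsgn cs (u * v) t = nsgn cs u t * nsgn cs v (u⁻¹ * t * u) := by
  unfold nsgn
  rw [mul_inv_rev, map_mul, Equiv.Perm.mul_apply, theta_apply cs u⁻¹ t 1, inv_inv,
    theta_apply cs v⁻¹ (u⁻¹ * t * u) (1 * ((theta cs u⁻¹) (t, 1)).2)]

private lemma nsgn_inv_pair (w t : W) :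
    nsgn cs w t * nsgn cs w⁻¹ (w⁻¹ * t * w) = 1 := by
  rw [← nsgn_mul, mul_inv_cancel, nsgn_one]

private lemma nsgn_refl {t : W} (ht : cs.IsReflection t) : nsgn cs t t = -1 := by
  obtain ⟨w, i, rfl⟩ := ht
  have harg : w⁻¹ * (w * (ss i * w⁻¹)) * w = ss i := by group
  have h1 := nsgn_mul cs w (ss i * w⁻¹) (w * (ss i * w⁻¹))
  rw [harg] at h1
  have h3 : (ss i)⁻¹ * ss i * ss i = ss i := by
    rw [cs.inv_simple]
    simp [mul_assoc, cs.simple_mul_simple_self]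
  have h2 := nsgn_mul cs (ss i) w⁻¹ (ss i)
  rw [h3, nsgn_simple, if_pos rfl] at h2
  have h4 := nsgn_inv_pair cs w (w * (ss i * w⁻¹))
  rw [harg] at h4
  rw [show w * ss i * w⁻¹ = w * (ss i * w⁻¹) from mul_assoc _ _ _]
  rw [h1, h2, neg_one_mul, mul_neg, h4]

private lemma nsgn_neg_imp_lt : ∀ (n : ℕ) (w t : W), ℓ w ≤ n → cs.IsReflection t →
    nsgn cs w t = -1 → ℓ (t * w) < ℓ w := by
  intro n
  induction n with
  | zero =>
    intro w t hw _ hn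
    have : w = 1 := by
      rw [← cs.length_eq_zero_iff]
      omega
    rw [this, nsgn_one] at hn
    exact absurd hn (by decide)
  | succ n ih =>
    intro w t hw ht hn
    have hwne : w ≠ 1 := by
      intro h
      rw [h, nsgn_one] at hn
      exact absurd hn (by decide)
    obtain ⟨i, hi⟩ := cs.exists_leftDescent_of_ne_one hwne
    have hi' : ℓ (ss i * w) < ℓ w := hi
    by_cases hts : t = ss i
    · rw [hts]; exact hi'
    · have hcoc : nsgn cs w t = nsgn cs (ss i) t * nsgn cs (ss i * w) ((ss i)⁻¹ * t * ss i) := by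
        conv_lhs => rw [← cs.simple_mul_simple_cancel_left (w := w) i]
        exact nsgn_mul cs _ _ _
      rw [nsgn_simple, if_neg hts, one_mul, cs.inv_simple] at hcoc
      have hrefl' : cs.IsReflection (ss i * t * ss i) := by
        have := CoxeterSystem.IsReflection.conj ht (ss i)
        rwa [cs.inv_simple] at this
      have hlen : ℓ (ss i * w) ≤ n := by omega
      have hlt := ih (ss i * w) (ss i * t * ss i) hlen hrefl' (by rw [← hcoc]; exact hn)
      have hform : t * w = ss i * ((ss i * t * ss i) * (ss i * w)) := by
        simp [mul_assoc, cs.simple_mul_simple_cancel_left]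
      rw [hform]
      calc ℓ (ss i * ((ss i * t * ss i) * (ss i * w)))
          ≤ ℓ (ss i) + ℓ ((ss i * t * ss i) * (ss i * w)) := cs.length_mul_le _ _
      _ = 1 + ℓ ((ss i * t * ss i) * (ss i * w)) := by rw [cs.length_simple]
      _ < ℓ w := by omega

private lemma length_lt_iff_nsgn {t : W} (ht : cs.IsReflection t) (w : W) :
    ℓ (t * w) < ℓ w ↔ nsgn cs w t = -1 := by
  constructor
  · intro hlt
    have hcoc : nsgn cs w t = nsgn cs t t * nsgn cs (t * w) (t⁻¹ * t * t) := by
      conv_lhs => rw [show w = t * (t * w) by rw [← mul_assoc, ht.mul_self, one_mul]]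
      exact nsgn_mul cs _ _ _
    have harg : t⁻¹ * t * t = t := by rw [ht.inv, ht.mul_self, one_mul]
    rw [harg, nsgn_refl cs ht] at hcoc
    rcases Int.units_eq_one_or (nsgn cs (t * w) t) with h1 | h1
    · rw [hcoc, h1, mul_one]
    · exfalso
      have := nsgn_neg_imp_lt cs (ℓ (t * w)) (t * w) t le_rfl ht h1
      rw [← mul_assoc, ht.mul_self, one_mul] at this
      omega
  · intro hn
    exact nsgn_neg_imp_lt cs (ℓ w) w t le_rfl ht hn

private lemma lt_simple_mul_iff (i : B) {t : W} (ht : cs.IsReflection t) (hne : t ≠ ss i)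
    (y : W) :
    ℓ (t * (ss i * y)) < ℓ (ss i * y) ↔ ℓ ((ss i * t * ss i) * y) < ℓ y := by
  have hrefl' : cs.IsReflection (ss i * t * ss i) := by
    have := CoxeterSystem.IsReflection.conj ht (ss i)
    rwa [cs.inv_simple] at this
  rw [length_lt_iff_nsgn cs ht, length_lt_iff_nsgn cs hrefl']
  have hx : nsgn cs (ss i * y) t = nsgn cs (ss i) t * nsgn cs y ((ss i)⁻¹ * t * ss i) :=
    nsgn_mul cs _ _ _
  rw [nsgn_simple, if_neg hne, one_mul, cs.inv_simple] at hx
  rw [hx]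

private lemma conj_step (i : B) (N : Subgroup W) (hsN : ss i ∈ N) (y : W) :
    {t : W | cs.IsReflection t ∧ ℓ (t * (ss i * y)) < ℓ (ss i * y) ∧ t ∉ N} =
      (fun t => ss i * t * (ss i)⁻¹) ''
        {t : W | cs.IsReflection t ∧ ℓ (t * y) < ℓ y ∧ t ∉ N} := by
  ext t
  simp only [Set.mem_setOf_eq, Set.mem_image]
  constructor
  · rintro ⟨ht, hlt, htN⟩
    have hne : t ≠ ss i := by
      intro h
      exact htN (h ▸ hsN)
    refine ⟨ss i * t * ss i, ⟨?_, ?_, ?_⟩, ?_⟩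
    · have := CoxeterSystem.IsReflection.conj ht (ss i)
      rwa [cs.inv_simple] at this
    · exact (lt_simple_mul_iff cs i ht hne y).mp hlt
    · intro hmem
      apply htN
      have : ss i * (ss i * t * ss i) * ss i ∈ N := mul_mem (mul_mem hsN hmem) hsN
      rwa [show ss i * (ss i * t * ss i) * ss i = t by
        simp [mul_assoc, cs.simple_mul_simple_cancel_left, cs.simple_mul_simple_self]] at this
    · rw [cs.inv_simple]
      simp [mul_assoc, cs.simple_mul_simple_cancel_left, cs.simple_mul_simple_self]
  · rintro ⟨t', ⟨ht', hlt', ht'N⟩, rfl⟩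
    rw [cs.inv_simple]
    have hne : ss i * t' * ss i ≠ ss i := by
      intro h
      apply ht'N
      have := congrArg (fun z => ss i * z * ss i) h
      rw [show ss i * (ss i * t' * ss i) * ss i = t' by
        simp [mul_assoc, cs.simple_mul_simple_cancel_left, cs.simple_mul_simple_self]] at this
      rw [this]
      exact mul_mem (mul_mem hsN hsN) hsN
    have hrefl : cs.IsReflection (ss i * t' * ss i) := by
      have := CoxeterSystem.IsReflection.conj ht' (ss i)
      rwa [cs.inv_simple] at this
    refine ⟨hrefl, ?_, ?_⟩
    · rw [lt_simple_mul_iff cs i hrefl hne y]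
      rwa [show ss i * (ss i * t' * ss i) * ss i = t' by
        simp [mul_assoc, cs.simple_mul_simple_cancel_left, cs.simple_mul_simple_self]]
    · intro hmem
      apply ht'N
      have : ss i * (ss i * t' * ss i) * ss i ∈ N := mul_mem (mul_mem hsN hmem) hsN
      rwa [show ss i * (ss i * t' * ss i) * ss i = t' by
        simp [mul_assoc, cs.simple_mul_simple_cancel_left, cs.simple_mul_simple_self]] at this

lemma conj_closure (N : Subgroup W) (gens : Set W)
    (hgens : ∀ g ∈ gens, (∃ i, g = cs.simple i) ∧ g ∈ N)
    {w : W} (hw : w ∈ Subgroup.closure gens) :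
    ∀ y : W, {t : W | cs.IsReflection t ∧ ℓ (t * (w * y)) < ℓ (w * y) ∧ t ∉ N} =
      (fun t => w * t * w⁻¹) '' {t : W | cs.IsReflection t ∧ ℓ (t * y) < ℓ y ∧ t ∉ N} := by
  induction hw using Subgroup.closure_induction with
  | mem g hg =>
    obtain ⟨⟨i, rfl⟩, hgN⟩ := hgens g hg
    exact conj_step cs i N hgN
  | one =>
    intro y
    simp
  | mul u v hu hv hpu hpv =>
    intro y
    rw [mul_assoc, hpu (v * y), hpv y, Set.image_image]
    apply Set.image_congr
    intro t _
    group
  | inv u hu hpu =>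
    intro y
    have h1 := hpu (u⁻¹ * y)
    rw [← mul_assoc, mul_inv_cancel, one_mul] at h1
    have h2 := congrArg (fun S => (fun t => u⁻¹ * t * u⁻¹⁻¹) '' S) h1
    rw [Set.image_image] at h2
    rw [h2]
    have : ∀ t : W, u⁻¹ * (u * t * u⁻¹) * u⁻¹⁻¹ = t := by intro t; group
    conv_rhs => rw [show (fun t => u⁻¹ * (u * t * u⁻¹) * u⁻¹⁻¹) = fun t : W => t by
      funext t; exact this t]
    rw [Set.image_id']

end mainCox

end CoxAux

-- ===== auxiliary: Bruhat order vs length =====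

lemma CoxAux.bruhat_iff {B W : Type*} [Group W] {M : CoxeterMatrix B}
    (cs : CoxeterSystem M W) {t : W} (ht : cs.IsReflection t) (y : W) :
    cs.bruhatLT (t * y) y ↔ cs.length (t * y) < cs.length y := by
  constructor
  · intro h
    have key : ∀ {u v : W}, Relation.TransGen
        (fun a b : W => (∃ t : W, cs.IsReflection t ∧ b = t * a) ∧
          cs.length a < cs.length b) u v → cs.length u < cs.length v := by
      intro u v h
      induction h with
      | single h => exact h.2
      | tail _ h ih => exact ih.trans h.2
    exact key h
  · intro h
    exact Relation.TransGen.single ⟨⟨t, ht, by rw [← mul_assoc, ht.mul_self, one_mul]⟩, h⟩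

-- ===== auxiliary: root system lemmas =====

namespace RootAux

open scoped RealInnerProductSpace

variable {V : Type*} [NormedAddCommGroup V] [InnerProductSpace ℝ V] [FiniteDimensional ℝ V]

noncomputable def cR (x β : V) : ℝ := 2 * ⟪x, β⟫ / ⟪β, β⟫

lemma inner_self_pos' {α : V} (hα : α ≠ 0) : 0 < ⟪α, α⟫ := by
  rw [real_inner_self_eq_norm_sq]
  exact pow_pos (norm_pos_iff.mpr hα) 2

lemma sfin_coe (β x : V) : sfin β x = Submodule.reflection (ℝ ∙ β)ᗮ x := rfl

lemma sfin_apply {β : V} (hβ : β ≠ 0) (x : V) : sfin β x = x - cR x β • β := by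
  have hb2 : ⟪β, β⟫ = (‖β‖ : ℝ) ^ 2 := real_inner_self_eq_norm_sq β
  rw [sfin_coe, Submodule.reflection_orthogonal_apply, Submodule.reflection_singleton_apply, neg_sub]
  unfold cR
  rw [real_inner_comm x β, hb2]
  congr 1
  rw [two_smul, two_mul, add_div, add_smul]
  norm_cast

lemma sfin_inner (β x y : V) : ⟪sfin β x, sfin β y⟫ = ⟪x, y⟫ := by
  rw [sfin_coe, sfin_coe]
  exact LinearIsometryEquiv.inner_map_map _ x y

lemma sfin_sfin (β x : V) : sfin β (sfin β x) = x := by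
  rw [sfin_coe, sfin_coe]
  exact Submodule.reflection_reflection _ x

lemma sfin_inner_left (β x y : V) : ⟪sfin β x, y⟫ = ⟪x, sfin β y⟫ := by
  calc ⟪sfin β x, y⟫ = ⟪sfin β x, sfin β (sfin β y)⟫ := by rw [sfin_sfin]
  _ = ⟪x, sfin β y⟫ := sfin_inner _ _ _

lemma sfin_map_sub (β u v : V) (c : ℝ) : sfin β (u - c • v) = sfin β u - c • sfin β v := by
  rw [sfin_coe, sfin_coe, sfin_coe]
  simp [map_sub, map_smul]

lemma sfin_zero (β : V) : sfin β 0 = 0 := by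
  rw [sfin_coe]
  simp

lemma sfin_ne_zero {β x : V} (hx : x ≠ 0) : sfin β x ≠ 0 := by
  intro h
  apply hx
  have := congrArg (sfin β) h
  rw [sfin_sfin, sfin_zero] at this
  exact this

lemma sfin_neg (α : V) : sfin (-α) = sfin α := by
  by_cases hα : α = 0
  · rw [hα, neg_zero]
  · ext x
    rw [sfin_apply (neg_ne_zero.mpr hα), sfin_apply hα]
    unfold cR
    rw [inner_neg_neg, inner_neg_right]
    rw [show 2 * -⟪x, α⟫ / ⟪α, α⟫ = -(2 * ⟪x, α⟫ / ⟪α, α⟫) by ring, neg_smul, smul_neg, neg_neg]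

lemma sfin_conj {β α : V} (hβ : β ≠ 0) (hα : α ≠ 0) :
    sfin (sfin β α) = sfin β * sfin α * sfin β := by
  have hγ : sfin β α ≠ 0 := sfin_ne_zero hα
  ext x
  rw [AffineEquiv.coe_mul, AffineEquiv.coe_mul]
  simp only [Function.comp_apply]
  rw [sfin_apply hγ x, sfin_apply hα (sfin β x), sfin_map_sub, sfin_sfin]
  have h1 : ⟪x, sfin β α⟫ = ⟪sfin β x, α⟫ := (sfin_inner_left β x α).symm
  have h2 : ⟪sfin β α, sfin β α⟫ = ⟪α, α⟫ := sfin_inner β α α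
  unfold cR
  rw [h1, h2]

lemma sfin_mul_self (β : V) : sfin β * sfin β = 1 := by
  ext x
  rw [AffineEquiv.coe_mul]
  simp only [Function.comp_apply]
  rw [sfin_sfin]
  rfl

variable {R : RootSystemIn V}

lemma neg_root {α : V} (hα : α ∈ R.roots) : -α ∈ R.roots := by
  have h0 : ⟪α, α⟫ ≠ 0 := ne_of_gt (inner_self_pos' (R.ne_zero α hα))
  have h2 : 2 * ⟪α, α⟫ / ⟪α, α⟫ = 2 := by
    field_simp
  have := R.reflect_mem α hα α hα
  rw [h2] at this
  rwa [show α - (2 : ℝ) • α = -α by module] at this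

lemma sfin_root_mem {α β : V} (hα : α ∈ R.roots) (hβ : β ∈ R.roots) :
    α - cR α β • β ∈ R.roots :=
  R.reflect_mem β hβ α hα

lemma crystal' {α β : V} (hα : α ∈ R.roots) (hβ : β ∈ R.roots) :
    ∃ k : ℤ, cR α β = (k : ℝ) :=
  R.crystal β hβ α hα

lemma nonprop {α β : V} (hα : α ∈ R.roots) (hβ : β ∈ R.roots) (h1 : β ≠ α) (h2 : β ≠ -α) :
    ∀ r : ℝ, β ≠ r • α := by
  intro r hr
  rcases R.reduced α hα r (hr ▸ hβ) with h | h
  · rw [h, one_smul] at hr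
    exact h1 hr
  · rw [h, neg_smul, one_smul] at hr
    exact h2 hr

lemma inner_sq_lt {α β : V} (hα : α ∈ R.roots) (hβ : β ∈ R.roots)
    (hnp : ∀ r : ℝ, β ≠ r • α) : ⟪α, β⟫ ^ 2 < ⟪α, α⟫ * ⟪β, β⟫ := by
  have hα0 : α ≠ 0 := R.ne_zero α hα
  have hn0 : ‖α‖ ≠ 0 := norm_ne_zero_iff.mpr hα0
  have h1 : ⟪α, β⟫ < ‖α‖ * ‖β‖ := by
    rw [inner_lt_norm_mul_iff_real]
    intro h
    apply hnp (‖α‖⁻¹ * ‖β‖)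
    rw [mul_smul, h, inv_smul_smul₀ hn0]
  have h2 : -⟪α, β⟫ < ‖α‖ * ‖β‖ := by
    have := inner_lt_norm_mul_iff_real (x := α) (y := -β)
    rw [inner_neg_right, norm_neg] at this
    rw [this]
    intro h
    apply hnp (-(‖α‖⁻¹ * ‖β‖))
    rw [neg_smul, mul_smul, h, inv_smul_smul₀ hn0, neg_neg]
  have habs : |⟪α, β⟫| < ‖α‖ * ‖β‖ := abs_lt.mpr ⟨by linarith, h1⟩
  have hsq : ⟪α, β⟫ ^ 2 < (‖α‖ * ‖β‖) ^ 2 := by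
    rw [← sq_abs]
    apply pow_lt_pow_left₀ habs (abs_nonneg _)
    norm_num
  calc ⟪α, β⟫ ^ 2 < (‖α‖ * ‖β‖) ^ 2 := hsq
  _ = ⟪α, α⟫ * ⟪β, β⟫ := by
      rw [mul_pow, real_inner_self_eq_norm_sq, real_inner_self_eq_norm_sq]

lemma cR_prod_lt {α β : V} (hα : α ∈ R.roots) (hβ : β ∈ R.roots)
    (h1 : β ≠ α) (h2 : β ≠ -α) : cR α β * cR β α < 4 := by
  have hsq := inner_sq_lt hα hβ (nonprop hα hβ h1 h2)
  have haa : 0 < ⟪α, α⟫ := inner_self_pos' (R.ne_zero α hα)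
  have hbb : 0 < ⟪β, β⟫ := inner_self_pos' (R.ne_zero β hβ)
  have hc : ⟪β, α⟫ = ⟪α, β⟫ := by rw [real_inner_comm]
  unfold cR
  rw [div_mul_div_comm, div_lt_iff₀ (by positivity), hc]
  nlinarith [hsq]

lemma sub_root {α β : V} (hα : α ∈ R.roots) (hβ : β ∈ R.roots)
    (hip : 0 < ⟪α, β⟫) (h1 : α ≠ β) (h2 : α ≠ -β) : α - β ∈ R.roots := by
  have haa : 0 < ⟪α, α⟫ := inner_self_pos' (R.ne_zero α hα)
  have hbb : 0 < ⟪β, β⟫ := inner_self_pos' (R.ne_zero β hβ)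
  obtain ⟨k, hk⟩ := crystal' hα hβ
  obtain ⟨k', hk'⟩ := crystal' hβ hα
  have hkpos : 0 < (k : ℝ) := by
    rw [← hk]
    unfold cR
    exact div_pos (by linarith) hbb
  have hk1 : 1 ≤ k := by exact_mod_cast hkpos
  have hip2 : 0 < ⟪β, α⟫ := by rw [real_inner_comm]; exact hip
  have hk'pos : 0 < (k' : ℝ) := by
    rw [← hk']
    unfold cR
    exact div_pos (by linarith) haa
  have hk'1 : 1 ≤ k' := by exact_mod_cast hk'pos
  have hβα : β ≠ α := fun h => h1 h.symm
  have hβα2 : β ≠ -α := by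
    intro h
    apply h2
    rw [h, neg_neg]
  have hprod : (k : ℝ) * (k' : ℝ) < 4 := by
    rw [← hk, ← hk']
    exact cR_prod_lt hα hβ hβα hβα2
  have hprodZ : k * k' < 4 := by exact_mod_cast hprod
  have hcase : k = 1 ∨ k' = 1 := by
    by_contra hcon
    push_neg at hcon
    have e1 : 2 ≤ k := by omega
    have e2 : 2 ≤ k' := by omega
    nlinarith
  rcases hcase with h | h
  · have := sfin_root_mem hα hβ
    rw [hk, h] at this
    simpa using this
  · have := sfin_root_mem hβ hα
    rw [hk', h] at this
    simp only [Int.cast_one, one_smul] at this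
    have := neg_root (R := R) this
    rwa [neg_sub] at this

section withF

variable (f : V →ₗ[ℝ] ℝ) {Pos : Set V}
  (hf : ∀ α ∈ R.roots, f α ≠ 0)
  (hPosEq : Pos = {α | α ∈ R.roots ∧ 0 < f α})

include hPosEq in
lemma mem_Pos {x : V} : x ∈ Pos ↔ x ∈ R.roots ∧ 0 < f x := by
  rw [hPosEq]
  rfl

include hf hPosEq in
lemma neg_mem_Pos {x : V} (hx : x ∈ R.roots) (hfx : ¬0 < f x) : -x ∈ Pos := by
  rw [mem_Pos f hPosEq]
  refine ⟨neg_root hx, ?_⟩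
  have := hf x hx
  rw [map_neg]
  rcases lt_trichotomy (f x) 0 with h | h | h
  · linarith
  · exact absurd h this
  · exact absurd h hfx

include hf hPosEq in
lemma sfin_base_pos {α β : V} (hb : β ∈ baseOf Pos) (ha : α ∈ Pos) (hne : α ≠ β) :
    α - cR α β • β ∈ Pos := by
  obtain ⟨hbP, hbInd⟩ := hb
  have hαr : α ∈ R.roots := ((mem_Pos f hPosEq).mp ha).1
  have hβr : β ∈ R.roots := ((mem_Pos f hPosEq).mp hbP).1
  have hfα : 0 < f α := ((mem_Pos f hPosEq).mp ha).2
  have hfβ : 0 < f β := ((mem_Pos f hPosEq).mp hbP).2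
  have haa : 0 < ⟪α, α⟫ := inner_self_pos' (R.ne_zero α hαr)
  have hbb : 0 < ⟪β, β⟫ := inner_self_pos' (R.ne_zero β hβr)
  obtain ⟨k, hk⟩ := crystal' hαr hβr
  have hγr : α - cR α β • β ∈ R.roots := sfin_root_mem hαr hβr
  have hfγ : f (α - cR α β • β) = f α - (k : ℝ) * f β := by
    rw [map_sub, map_smul, hk, smul_eq_mul]
  by_cases hk0 : k ≤ 0
  · rw [mem_Pos f hPosEq]
    refine ⟨hγr, ?_⟩
    rw [hfγ]
    have : (k : ℝ) ≤ 0 := by exact_mod_cast hk0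
    nlinarith
  push_neg at hk0
  have hk1 : 1 ≤ k := hk0
  by_cases hfγpos : 0 < f (α - cR α β • β)
  · exact (mem_Pos f hPosEq).mpr ⟨hγr, hfγpos⟩
  exfalso
  have hfγneg : f (α - cR α β • β) < 0 := by
    rcases lt_trichotomy (f (α - cR α β • β)) 0 with h | h | h
    · exact h
    · exact absurd h (hf _ hγr)
    · exact absurd h hfγpos
  have hip : 0 < ⟪α, β⟫ := by
    have hcr : 0 < cR α β := by
      rw [hk]
      exact_mod_cast hk0
    unfold cR at hcr
    rcases div_pos_iff.mp hcr with ⟨h1, _⟩ | ⟨_, h2⟩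
    · linarith
    · linarith
  have hane : α ≠ -β := by
    intro h
    rw [h, map_neg] at hfα
    linarith
  have hδP : -(α - cR α β • β) ∈ Pos := by
    rw [mem_Pos f hPosEq]
    refine ⟨neg_root hγr, ?_⟩
    rw [map_neg]
    linarith
  -- case k = 1
  by_cases hkeq1 : k = 1
  · apply hbInd
    refine ⟨α, ha, -(α - cR α β • β), hδP, ?_⟩
    rw [hk, hkeq1]
    push_cast
    module
  -- now k ≥ 2
  have hk2 : 2 ≤ k := by omega
  obtain ⟨k', hk'⟩ := crystal' hβr hαr
  have hip' : 0 < ⟪β, α⟫ := by rwa [real_inner_comm]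
  have hk'1 : 1 ≤ k' := by
    have : 0 < (k' : ℝ) := by
      rw [← hk']
      unfold cR
      exact div_pos (by linarith) haa
    exact_mod_cast this
  have hβα : β ≠ α := fun h => hne h.symm
  have hβα2 : β ≠ -α := by
    intro h
    apply hane
    rw [h, neg_neg]
  have hprod : (k : ℝ) * (k' : ℝ) < 4 := by
    rw [← hk, ← hk']
    exact cR_prod_lt hαr hβr hβα hβα2
  have hprodZ : k * k' < 4 := by exact_mod_cast hprod
  have hk'eq1 : k' = 1 := by nlinarith
  rw [hk'eq1, mul_one] at hprodZ
  have hk3 : k ≤ 3 := by omega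
  -- β - α is a root with f < 0, so α - β ∈ Pos
  have hβαr : β - α ∈ R.roots := by
    have := sfin_root_mem hβr hαr
    rw [hk', hk'eq1] at this
    simpa using this
  have hfβα : f (β - α) < 0 := by
    rcases lt_trichotomy (f (β - α)) 0 with h | h | h
    · exact h
    · exact absurd h (hf _ hβαr)
    · exfalso
      apply hbInd
      exact ⟨β - α, (mem_Pos f hPosEq).mpr ⟨hβαr, h⟩, α, ha, by module⟩
  have hρr : α - β ∈ R.roots := by
    have := neg_root (R := R) hβαr
    rwa [neg_sub] at this
  have hρP : α - β ∈ Pos := by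
    rw [mem_Pos f hPosEq]
    refine ⟨hρr, ?_⟩
    have : f (α - β) = -(f (β - α)) := by rw [map_sub, map_sub]; ring
    rw [this]
    linarith
  rcases (by omega : k = 2 ∨ k = 3) with hkk | hkk
  · apply hbInd
    refine ⟨α - β, hρP, -(α - cR α β • β), hδP, ?_⟩
    rw [hk, hkk]
    push_cast
    module
  · -- k = 3
    have hcρβ : cR (α - β) β = cR α β - 2 := by
      unfold cR
      rw [inner_sub_left]
      field_simp
    have hζr : (α - β) - cR (α - β) β • β ∈ R.roots := sfin_root_mem hρr hβr
    have hζeq : (α - β) - cR (α - β) β • β = α - (2 : ℝ) • β := by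
      rw [hcρβ, hk, hkk]
      push_cast
      module
    rw [hζeq] at hζr
    rcases lt_trichotomy (f (α - (2 : ℝ) • β)) 0 with h | h | h
    · -- 2β - α ∈ Pos ; (α - β) + (2β - α) = β
      apply hbInd
      refine ⟨α - β, hρP, -(α - (2 : ℝ) • β), ?_, by module⟩
      rw [mem_Pos f hPosEq]
      refine ⟨neg_root hζr, ?_⟩
      rw [map_neg]
      linarith
    · exact absurd h (hf _ hζr)
    · -- (α - 2β) + (3β - α) = β
      apply hbInd
      refine ⟨α - (2 : ℝ) • β, (mem_Pos f hPosEq).mpr ⟨hζr, h⟩,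
        -(α - cR α β • β), hδP, ?_⟩
      rw [hk, hkk]
      push_cast
      module

end withF

end RootAux
/-- For `x ∈ W_aff` and `w ∈ W_fin`, the set of reflections `t ∈ R_L(wx)` with `t ∉ W_fin`
equals `w (R_L(x) \ R(W_fin)) w⁻¹`. -/
theorem reflections_conj_Wfin
    {V : Type*} [NormedAddCommGroup V] [InnerProductSpace ℝ V] [FiniteDimensional ℝ V]
    (R : RootSystemIn V) (Pos : Set V) (hPos : IsPositiveSystem R Pos)
    (αh : V) (hαh : IsHighestShortRoot R Pos αh)
    {B : Type*} {M : CoxeterMatrix B} (cs : CoxeterSystem M (Waff R))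
    (hcs : IsAffineCoxeterStructure R cs Pos αh)
    (p : ℕ) [Fact p.Prime]
    (hph : 2 * ⟪rhoOf Pos, αh⟫ / ⟪αh, αh⟫ + 1 ≤ (p : ℝ))
    (x w : ↥(Waff R)) (hw : (w : V ≃ᵃ[ℝ] V) ∈ Wfin R) :
    {t : ↥(Waff R) | cs.IsReflection t ∧ cs.bruhatLT (t * (w * x)) (w * x) ∧
        (t : V ≃ᵃ[ℝ] V) ∉ Wfin R} =
      (fun t => w * t * w⁻¹) ''
        {t : ↥(Waff R) | cs.IsReflection t ∧ cs.bruhatLT (t * x) x ∧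
          (t : V ≃ᵃ[ℝ] V) ∉ Wfin R} := by
  classical
  obtain ⟨f, hf, hPosEq⟩ := hPos
  have hPossub : Pos ⊆ R.roots := by
    rw [hPosEq]; intro z hz; exact hz.1
  have hbasePos : baseOf Pos ⊆ Pos := fun z hz => hz.1
  set gens : Set ↥(Waff R) := {g | ∃ α ∈ baseOf Pos, (g : V ≃ᵃ[ℝ] V) = sfin α} with hgens_def
  set N : Subgroup ↥(Waff R) := Subgroup.comap (Waff R).subtype (Wfin R) with hN_def
  have hroot_mem_Waff : ∀ γ ∈ R.roots, sfin γ ∈ Waff R := fun γ hγ =>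
    Subgroup.subset_closure (Or.inl ⟨γ, hγ, rfl⟩)
  have hPosFin : Pos.Finite := R.finite.subset hPossub
  set μ : V → ℕ := fun α => {δ | δ ∈ Pos ∧ f δ ≤ f α}.ncard with hμ_def
  have hμfin : ∀ α : V, {δ | δ ∈ Pos ∧ f δ ≤ f α}.Finite := fun α =>
    hPosFin.subset (fun δ hδ => hδ.1)
  have hμpos : ∀ α ∈ Pos, 0 < μ α := by
    intro α hα
    rw [hμ_def]
    exact (Set.ncard_pos (hμfin α)).mpr ⟨α, hα, le_rfl⟩
  have hμlt : ∀ α ∈ Pos, ∀ γ, γ ∈ Pos → f γ < f α → μ γ < μ α := by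
    intro α hα γ hγ hlt
    apply Set.ncard_lt_ncard ?_ (hμfin α)
    constructor
    · intro δ hδ
      exact ⟨hδ.1, hδ.2.trans hlt.le⟩
    · intro hsup
      have := (hsup ⟨hα, le_rfl⟩).2
      linarith
  have hfposP : ∀ α ∈ Pos, 0 < f α := fun α hα => ((RootAux.mem_Pos f hPosEq).mp hα).2
  have hclos : ∀ (n : ℕ) (α), α ∈ Pos → μ α ≤ n → α ∈ AddSubmonoid.closure (baseOf Pos) := by
    intro n
    induction n with
    | zero =>
      intro α hα hn
      exact absurd hn (by have := hμpos α hα; omega)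
    | succ n ih =>
      intro α hα hn
      by_cases hb : α ∈ baseOf Pos
      · exact AddSubmonoid.subset_closure hb
      · have hdec : ∃ b ∈ Pos, ∃ c ∈ Pos, α = b + c := by
          by_contra hcon
          exact hb ⟨hα, hcon⟩
        obtain ⟨b, hbP, c, hcP, habc⟩ := hdec
        have hsum : f α = f b + f c := by rw [habc, map_add]
        have hfb : f b < f α := by
          have := hfposP c hcP; linarith
        have hfc : f c < f α := by
          have := hfposP b hbP; linarith
        have h1 := ih b hbP (by have := hμlt α hα b hbP hfb; omega)
        have h2 := ih c hcP (by have := hμlt α hα c hcP hfc; omega)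
        rw [habc]
        exact add_mem h1 h2
  have hfind : ∀ α ∈ Pos, ∃ β ∈ baseOf Pos, 0 < ⟪α, β⟫ := by
    intro α hα
    obtain ⟨m, hm, hsum⟩ := AddSubmonoid.exists_multiset_of_mem_closure
      (hclos (μ α) α hα le_rfl)
    by_contra hcon
    push_neg at hcon
    have hsle : ∀ (s : Multiset V), (∀ x ∈ s, x ∈ baseOf Pos) → ⟪α, s.sum⟫ ≤ 0 := by
      intro s
      induction s using Multiset.induction with
      | empty => intro _; simp
      | cons y t ihs =>
        intro hmem
        rw [Multiset.sum_cons, inner_add_right]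
        have h1 := hcon y (hmem y (Multiset.mem_cons_self y t))
        have h2 := ihs (fun z hz => hmem z (Multiset.mem_cons_of_mem hz))
        linarith
    have h0 : ⟪α, α⟫ ≤ 0 := by
      have := hsle m hm
      rwa [hsum] at this
    have := RootAux.inner_self_pos' (R.ne_zero α (hPossub hα))
    linarith
  have key : ∀ (n : ℕ) (α), α ∈ Pos → μ α ≤ n →
      ∃ u ∈ Subgroup.closure gens, ((u : ↥(Waff R)) : V ≃ᵃ[ℝ] V) = sfin α := by
    intro n
    induction n with
    | zero =>
      intro α hα hn
      exact absurd hn (by have := hμpos α hα; omega)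
    | succ n ih =>
      intro α hα hn
      by_cases hb : α ∈ baseOf Pos
      · exact ⟨⟨sfin α, hroot_mem_Waff α (hPossub hα)⟩,
          Subgroup.subset_closure ⟨α, hb, rfl⟩, rfl⟩
      · obtain ⟨β, hβb, hβip⟩ := hfind α hα
        have hβP := hbasePos hβb
        have hαr := hPossub hα
        have hβr := hPossub hβP
        have hα0 : α ≠ 0 := R.ne_zero α hαr
        have hβ0 : β ≠ 0 := R.ne_zero β hβr
        have hαβne : α ≠ β := fun h => hb (h ▸ hβb)
        have hγP : α - RootAux.cR α β • β ∈ Pos :=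
          RootAux.sfin_base_pos f hf hPosEq hβb hα hαβne
        have hcRpos : 0 < RootAux.cR α β := by
          unfold RootAux.cR
          exact div_pos (by linarith) (RootAux.inner_self_pos' hβ0)
        have hfγ : f (α - RootAux.cR α β • β) < f α := by
          rw [map_sub, map_smul, smul_eq_mul]
          have := hfposP β hβP
          nlinarith
        obtain ⟨u, hu, huc⟩ := ih _ hγP (by have := hμlt α hα _ hγP hfγ; omega)
        have hv_mem : sfin β ∈ Waff R := hroot_mem_Waff β hβr
        have hv : (⟨sfin β, hv_mem⟩ : ↥(Waff R)) ∈ Subgroup.closure gens :=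
          Subgroup.subset_closure ⟨β, hβb, rfl⟩
        refine ⟨⟨sfin β, hv_mem⟩ * u * ⟨sfin β, hv_mem⟩,
          mul_mem (mul_mem hv hu) hv, ?_⟩
        have hcoe : (((⟨sfin β, hv_mem⟩ : ↥(Waff R)) * u * ⟨sfin β, hv_mem⟩ : ↥(Waff R)) :
            V ≃ᵃ[ℝ] V) = sfin β * (↑u) * sfin β := rfl
        rw [hcoe, huc]
        have hγeq : α - RootAux.cR α β • β = sfin β α := (RootAux.sfin_apply hβ0 α).symm
        rw [hγeq, RootAux.sfin_conj hβ0 hα0]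
        have h2 := RootAux.sfin_mul_self β
        have h3 : sfin β * (sfin β * sfin α * sfin β) * sfin β =
            (sfin β * sfin β) * sfin α * (sfin β * sfin β) := by group
        rw [h3, h2, one_mul, mul_one]
  have hWfin_le : Wfin R ≤ Subgroup.map (Waff R).subtype (Subgroup.closure gens) := by
    show Subgroup.closure {g | ∃ α ∈ R.roots, g = sfin α} ≤ _
    apply (Subgroup.closure_le _).mpr
    rintro g ⟨γ, hγr, rfl⟩
    by_cases hfγ : 0 < f γ
    · obtain ⟨u, hu, huc⟩ := key (μ γ) γ ((RootAux.mem_Pos f hPosEq).mpr ⟨hγr, hfγ⟩) le_rfl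
      exact ⟨u, hu, huc⟩
    · have hnegP : -γ ∈ Pos := RootAux.neg_mem_Pos f hf hPosEq hγr hfγ
      obtain ⟨u, hu, huc⟩ := key (μ (-γ)) (-γ) hnegP le_rfl
      refine ⟨u, hu, ?_⟩
      show ((u : ↥(Waff R)) : V ≃ᵃ[ℝ] V) = sfin γ
      rw [huc, RootAux.sfin_neg]
  have hwP : w ∈ Subgroup.closure gens := by
    obtain ⟨u, hu, huc⟩ := hWfin_le hw
    have hue : u = w := Subtype.coe_injective huc
    rwa [← hue]
  have hgensP : ∀ g ∈ gens, (∃ i, g = cs.simple i) ∧ g ∈ N := by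
    rintro g ⟨γ, hγb, hgc⟩
    constructor
    · have hmem : g ∈ {g : ↥(Waff R) | ∃ α ∈ baseOf Pos, (g : V ≃ᵃ[ℝ] V) = sfin α} ∪
          {g : ↥(Waff R) | (g : V ≃ᵃ[ℝ] V) = saff αh 1} := Or.inl ⟨γ, hγb, hgc⟩
      rw [← hcs.1] at hmem
      exact hmem
    · show (Waff R).subtype g ∈ Wfin R
      have hsg : (Waff R).subtype g = sfin γ := hgc
      rw [hsg]
      exact Subgroup.subset_closure ⟨γ, hPossub (hbasePos hγb), rfl⟩
  have hmain := CoxAux.conj_closure cs N gens hgensP hwP x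
  have hsets : ∀ y : ↥(Waff R),
      {t : ↥(Waff R) | cs.IsReflection t ∧ cs.bruhatLT (t * y) y ∧
        (t : V ≃ᵃ[ℝ] V) ∉ Wfin R} =
      {t : ↥(Waff R) | cs.IsReflection t ∧ cs.length (t * y) < cs.length y ∧ t ∉ N} := by
    intro y
    ext t
    simp only [Set.mem_setOf_eq]
    constructor
    · rintro ⟨h1, h2, h3⟩
      exact ⟨h1, (CoxAux.bruhat_iff cs h1 y).mp h2, h3⟩
    · rintro ⟨h1, h2, h3⟩
      exact ⟨h1, (CoxAux.bruhat_iff cs h1 y).mpr h2, h3⟩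
  rw [hsets (w * x), hsets x]
  exact hmain
end

section
/- Let M, N be free Z_p-modules of finite rank and φ : M → N a Z_p-linear map with φ ⊗ Q_p an isomorphism. Define F̄^i(φ) as the image of φ⁻¹(p^i N) in M ⊗ F_p. Then max{ i ≥ 0 : F̄^i(φ) ≠ 0 } equals the maximal torsion exponent tmax(coker φ), i.e. the least d such that p^d annihilates coker φ. -/
open Pointwise TensorProduct

variable {p : ℕ} [Fact p.Prime]

lemma tmul_one_inj {P : Type*} [AddCommGroup P] [Module ℤ_[p] P] [Module.Free ℤ_[p] P] :
    Function.Injective (fun x : P => (1 : ℚ_[p]) ⊗ₜ[ℤ_[p]] x) := by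
  have hf : Function.Injective (Algebra.linearMap ℤ_[p] ℚ_[p]) := by
    intro a b h
    exact PadicInt.ext (by simpa [Algebra.linearMap_apply, PadicInt.algebraMap_apply] using h)
  have h2 : Function.Injective (LinearMap.rTensor P (Algebra.linearMap ℤ_[p] ℚ_[p])) :=
    Module.Flat.rTensor_preserves_injective_linearMap _ hf
  intro x y hxy
  have h3 : LinearMap.rTensor P (Algebra.linearMap ℤ_[p] ℚ_[p]) ((1:ℤ_[p]) ⊗ₜ x) =
      LinearMap.rTensor P (Algebra.linearMap ℤ_[p] ℚ_[p]) ((1:ℤ_[p]) ⊗ₜ y) := by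
    simpa using hxy
  have h4 := h2 h3
  simpa using congrArg (TensorProduct.lid ℤ_[p] P) h4

lemma pow_smul_tmul {P : Type*} [AddCommGroup P] [Module ℤ_[p] P] (k : ℕ) (x : P) :
    (p : ℚ_[p])^k • ((1:ℚ_[p]) ⊗ₜ[ℤ_[p]] x) = (1:ℚ_[p]) ⊗ₜ[ℤ_[p]] ((p : ℤ_[p])^k • x) := by
  rw [TensorProduct.tmul_smul, ← algebraMap_smul ℚ_[p] ((p : ℤ_[p])^k)
    ((1:ℚ_[p]) ⊗ₜ[ℤ_[p]] x)]
  norm_num [PadicInt.algebraMap_apply]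

lemma exists_pow_smul_eq_tmul {P : Type*} [AddCommGroup P] [Module ℤ_[p] P]
    (t : ℚ_[p] ⊗[ℤ_[p]] P) :
    ∃ (k : ℕ) (x : P), (p : ℚ_[p])^k • t = (1:ℚ_[p]) ⊗ₜ[ℤ_[p]] x := by
  have hp := (Fact.out : p.Prime)
  induction t using TensorProduct.induction_on with
  | zero => exact ⟨0, 0, by simp⟩
  | tmul c m =>
    obtain ⟨k, hk⟩ : ∃ k : ℕ, ‖(p:ℚ_[p])^k * c‖ ≤ 1 := by
      rcases eq_or_ne c 0 with rfl | hc
      · exact ⟨0, by simp⟩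
      · have hc' : 0 < ‖c‖ := norm_pos_iff.mpr hc
        have hlt : ((p:ℝ))⁻¹ < 1 := by
          rw [inv_lt_one_iff₀]
          right
          exact_mod_cast hp.one_lt
        obtain ⟨k, hk⟩ := exists_pow_lt_of_lt_one (by positivity : (0:ℝ) < ‖c‖⁻¹) hlt
        refine ⟨k, ?_⟩
        have : ‖(p:ℚ_[p])^k * c‖ = ((p:ℝ))⁻¹^k * ‖c‖ := by
          rw [norm_mul, norm_pow, Padic.norm_p]
        rw [this]
        have h5 := mul_lt_mul_of_pos_right hk hc'
        rw [inv_mul_cancel₀ (ne_of_gt hc')] at h5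
        linarith
    have hz : ∃ z : ℤ_[p], (z : ℚ_[p]) = (p:ℚ_[p])^k * c := ⟨⟨(p:ℚ_[p])^k * c, hk⟩, rfl⟩
    obtain ⟨z, hz⟩ := hz
    refine ⟨k, z • m, ?_⟩
    rw [TensorProduct.tmul_smul, ← algebraMap_smul ℚ_[p] z ((1:ℚ_[p]) ⊗ₜ[ℤ_[p]] m)]
    rw [smul_tmul', smul_tmul', PadicInt.algebraMap_apply, hz]
    simp [smul_eq_mul]
  | add x y hx hy =>
    obtain ⟨k1, x1, h1⟩ := hx
    obtain ⟨k2, x2, h2⟩ := hy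
    refine ⟨k1 + k2, (p : ℤ_[p])^k2 • x1 + (p : ℤ_[p])^k1 • x2, ?_⟩
    have e1 : (p:ℚ_[p])^(k1+k2) • x = (p:ℚ_[p])^k2 • ((p:ℚ_[p])^k1 • x) := by
      rw [smul_smul, ← pow_add, Nat.add_comm]
    have e2 : (p:ℚ_[p])^(k1+k2) • y = (p:ℚ_[p])^k1 • ((p:ℚ_[p])^k2 • y) := by
      rw [smul_smul, ← pow_add]
    rw [smul_add, e1, e2, h1, h2, pow_smul_tmul, pow_smul_tmul, ← TensorProduct.tmul_add]

variable {p : ℕ} [Fact p.Prime]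


lemma Submodule.mem_smul_pointwise_iff_exists' {R A : Type*} [CommRing R] [AddCommGroup A]
    [Module R A] (m : A) (a : R) (S : Submodule R A) :
    m ∈ a • S ↔ ∃ s ∈ S, a • s = m :=
  Set.mem_smul_set


/-- Let `M, N` be free `ℤ_[p]`-modules of finite rank and `φ : M → N` a `ℤ_[p]`-linear map
with `φ ⊗ ℚ_[p]` an isomorphism. Let `F̄^i(φ)` be the image of `F^i(φ) = φ⁻¹(pⁱ N)` in
`M ⊗ 𝔽_p = M/pM`. Then `max{ i ≥ 0 : F̄^i(φ) ≠ 0 }` equals the maximal torsion exponent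
`tmax(coker φ)`, the least `d` such that `p^d` annihilates `coker φ`. -/
theorem max_filtration_eq_tmax_coker
    {p : ℕ} [Fact p.Prime] {M N : Type*}
    [AddCommGroup M] [Module ℤ_[p] M] [Module.Free ℤ_[p] M] [Module.Finite ℤ_[p] M]
    [AddCommGroup N] [Module ℤ_[p] N] [Module.Free ℤ_[p] N] [Module.Finite ℤ_[p] N]
    (φ : M →ₗ[ℤ_[p]] N)
    (hφ : Function.Bijective (LinearMap.baseChange ℚ_[p] φ))
    (Fbar : ℕ → Submodule ℤ_[p] (M ⧸ ((p : ℤ_[p]) • (⊤ : Submodule ℤ_[p] M))))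
    (hFbar : ∀ i, Fbar i =
      Submodule.map ((p : ℤ_[p]) • (⊤ : Submodule ℤ_[p] M)).mkQ
        (Submodule.comap φ ((p : ℤ_[p]) ^ i • (⊤ : Submodule ℤ_[p] N)))) :
    sSup {i : ℕ | Fbar i ≠ ⊥} =
      sInf {d : ℕ | ∀ x : N ⧸ LinearMap.range φ, (p : ℤ_[p]) ^ d • x = 0} := by
  have hp : p.Prime := Fact.out
  have hp0 : (p : ℤ_[p]) ≠ 0 := by exact_mod_cast Nat.cast_ne_zero.mpr hp.ne_zero
  set T := {d : ℕ | ∀ x : N ⧸ LinearMap.range φ, (p : ℤ_[p]) ^ d • x = 0} with hTdef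
  set S := {i : ℕ | Fbar i ≠ ⊥} with hSdef
  -- φ is injective
  have hinj : Function.Injective φ := by
    intro x y hxy
    apply tmul_one_inj (p := p)
    apply hφ.injective
    simp only [LinearMap.baseChange_tmul, hxy]
  -- membership in T
  have hTmem : ∀ d : ℕ, d ∈ T ↔ ∀ y : N, (p : ℤ_[p]) ^ d • y ∈ LinearMap.range φ := by
    intro d
    constructor
    · intro h y
      have := h (Submodule.Quotient.mk y)
      rwa [← Submodule.Quotient.mk_smul, Submodule.Quotient.mk_eq_zero] at this
    · intro h x
      obtain ⟨y, rfl⟩ := Submodule.Quotient.mk_surjective _ x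
      rw [← Submodule.Quotient.mk_smul, Submodule.Quotient.mk_eq_zero]
      exact h y
  -- every element of N is killed mod range φ by some power of p
  have hD : ∀ y : N, ∃ k : ℕ, (p : ℤ_[p]) ^ k • y ∈ LinearMap.range φ := by
    intro y
    obtain ⟨t, ht⟩ := hφ.surjective ((1:ℚ_[p]) ⊗ₜ[ℤ_[p]] y)
    obtain ⟨k, x, hkx⟩ := exists_pow_smul_eq_tmul t
    refine ⟨k, x, ?_⟩
    apply tmul_one_inj (p := p)
    have : LinearMap.baseChange ℚ_[p] φ ((p:ℚ_[p])^k • t) = (p:ℚ_[p])^k • ((1:ℚ_[p]) ⊗ₜ[ℤ_[p]] y) := by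
      rw [map_smul, ht]
    rw [hkx, LinearMap.baseChange_tmul, pow_smul_tmul] at this
    exact this
  -- T is nonempty
  have hTne : T.Nonempty := by
    obtain ⟨s, hs⟩ := Module.Finite.fg_top (R := ℤ_[p]) (M := N)
    choose! k hk using hD
    refine ⟨s.sup k, (hTmem _).mpr ?_⟩
    intro y
    have hy : y ∈ Submodule.span ℤ_[p] (s : Set N) := by rw [hs]; trivial
    have hle : Submodule.span ℤ_[p] (s : Set N) ≤
        Submodule.comap (LinearMap.lsmul ℤ_[p] N ((p : ℤ_[p]) ^ s.sup k))
          (LinearMap.range φ) := by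
      rw [Submodule.span_le]
      intro g hg
      simp only [SetLike.mem_coe, Submodule.mem_comap, LinearMap.lsmul_apply]
      have h1 : (p : ℤ_[p]) ^ s.sup k • g
          = (p : ℤ_[p]) ^ (s.sup k - k g) • ((p : ℤ_[p]) ^ (k g) • g) := by
        rw [smul_smul, ← pow_add, Nat.sub_add_cancel (Finset.le_sup hg)]
      rw [h1]
      exact Submodule.smul_mem _ _ (hk g)
    simpa using hle hy
  set d := sInf T with hddef
  have hdT : d ∈ T := Nat.sInf_mem hTne
  have hdT' : ∀ y : N, (p : ℤ_[p]) ^ d • y ∈ LinearMap.range φ := (hTmem d).mp hdT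
  -- upper bound: every i ∈ S satisfies i ≤ d
  have hbound : ∀ i ∈ S, i ≤ d := by
    intro i hi
    by_contra hlt
    push_neg at hlt
    apply hi
    rw [hFbar i, Submodule.eq_bot_iff]
    rintro _ ⟨x, hx, rfl⟩
    obtain ⟨z, -, hz⟩ := (Submodule.mem_smul_pointwise_iff_exists' _ _ _).mp
      (Submodule.mem_comap.mp hx)
    obtain ⟨w, hw⟩ := hdT' z
    have hφx : φ x = φ ((p : ℤ_[p]) ^ (i - d) • w) := by
      rw [map_smul, hw, smul_smul, ← pow_add, Nat.sub_add_cancel hlt.le, hz]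
    have hx' : x = (p : ℤ_[p]) ^ (i - d) • w := hinj hφx
    rw [Submodule.mkQ_apply, Submodule.Quotient.mk_eq_zero]
    refine (Submodule.mem_smul_pointwise_iff_exists' _ _ _).mpr
      ⟨(p : ℤ_[p]) ^ (i - d - 1) • w, trivial, ?_⟩
    have h2 : i - d - 1 + 1 = i - d := by omega
    rw [hx', smul_smul, ← pow_succ', h2]
  rcases Nat.eq_zero_or_pos d with hd0 | hdpos
  · -- d = 0 : S ⊆ {0}
    rw [hd0]
    rcases Set.eq_empty_or_nonempty S with hS | hS
    · rw [hS, csSup_empty]; rfl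
    · exact Nat.le_antisymm (csSup_le hS (by intro i hi; simpa [hd0] using hbound i hi))
        (Nat.zero_le _)
  · -- d ≥ 1 : d ∈ S
    have hd1 : d - 1 ∉ T := fun h => by
      have := Nat.sInf_le h
      omega
    simp only [hTdef, Set.mem_setOf_eq, not_forall] at hd1
    obtain ⟨xbar, hxbar⟩ := hd1
    obtain ⟨y, rfl⟩ := Submodule.Quotient.mk_surjective _ xbar
    simp only [← Submodule.Quotient.mk_smul, Ne, Submodule.Quotient.mk_eq_zero] at hxbar
    obtain ⟨x0, hx0⟩ := hdT' y
    have hdS : d ∈ S := by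
      simp only [hSdef, Set.mem_setOf_eq, hFbar d]
      intro hbot
      have hmem : ((p : ℤ_[p]) • (⊤ : Submodule ℤ_[p] M)).mkQ x0 ∈
          Submodule.map ((p : ℤ_[p]) • (⊤ : Submodule ℤ_[p] M)).mkQ
            (Submodule.comap φ ((p : ℤ_[p]) ^ d • (⊤ : Submodule ℤ_[p] N))) := by
        exact Submodule.mem_map_of_mem (Submodule.mem_comap.mpr
          ((Submodule.mem_smul_pointwise_iff_exists' _ _ _).mpr ⟨y, trivial, hx0.symm⟩))
      rw [hbot, Submodule.mem_bot, Submodule.mkQ_apply, Submodule.Quotient.mk_eq_zero] at hmem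
      obtain ⟨x', -, hx'⟩ := (Submodule.mem_smul_pointwise_iff_exists' _ _ _).mp hmem
      apply hxbar
      refine ⟨x', ?_⟩
      have hcanc : (p : ℤ_[p]) • φ x' = (p : ℤ_[p]) • ((p : ℤ_[p]) ^ (d - 1) • y) := by
        have hd' : d - 1 + 1 = d := by omega
        rw [← map_smul, hx', hx0, smul_smul, ← pow_succ', hd']
      exact smul_right_injective N hp0 hcanc
    exact Nat.le_antisymm (csSup_le ⟨d, hdS⟩ hbound)
      (le_csSup ⟨d, hbound⟩ hdS)
end
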